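/- Let d be a positive divisor of N with gcd(d, N/d) = 1. Then ψ_d² maps P_d ∩ S₀(n,N)^± into S₀(n−1, N/d)^±; that is, for every s ∈ P_d ∩ S₀(n,N)^±, the (n−1)×(n−1) integer matrix ψ_d²(s) has determinant relatively prime to p·(N/d) and first row congruent to (∗,0,…,0) modulo N/d. -/

import Mathlib

open Matrix

/-- `g_x` over `ℤ`: the identity matrix with its `(1,2)` entry replaced by `x`. -/
def gmatZ (n : ℕ) (x : ℤ) : Matrix (Fin (n + 2)) (Fin (n + 2)) ℤ :=
  1 + x • Matrix.single 0 1 1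

/-- Conjugation `g_d s g_d⁻¹` (note `g_d⁻¹ = g_{-d}`). -/
def conjd (n : ℕ) (d : ℤ) (s : Matrix (Fin (n + 2)) (Fin (n + 2)) ℤ) :
    Matrix (Fin (n + 2)) (Fin (n + 2)) ℤ :=
  gmatZ n d * s * gmatZ n (-d)

/-- `S₀(m+1,N)^±`: integer matrices with nonzero determinant relatively prime to `pN`
whose first row is `≡ (∗,0,…,0) (mod N)`. -/
def S0pm (p N : ℕ) {m : ℕ} : Set (Matrix (Fin (m + 1)) (Fin (m + 1)) ℤ) :=
  {s | s.det ≠ 0 ∧ Int.gcd s.det (p * N) = 1 ∧ ∀ j : Fin (m + 1), j ≠ 0 → (N : ℤ) ∣ s 0 j}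

/-- `ψ_d¹(s)`: the `(1,1)` entry of `g_d s g_d⁻¹`. -/
def psi1 (n : ℕ) (d : ℤ) (s : Matrix (Fin (n + 2)) (Fin (n + 2)) ℤ) : ℤ :=
  conjd n d s 0 0

/-- `ψ_d²(s)`: the lower-right `(n-1)×(n-1)` block of `g_d s g_d⁻¹`. -/
def psi2 (n : ℕ) (d : ℤ) (s : Matrix (Fin (n + 2)) (Fin (n + 2)) ℤ) :
    Matrix (Fin (n + 1)) (Fin (n + 1)) ℤ :=
  Matrix.of fun i j => conjd n d s i.succ j.succ

lemma gmat_mul_neg (n : ℕ) (x : ℤ) : gmatZ n x * gmatZ n (-x) = 1 := by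
  have h : (Matrix.single 0 1 (1:ℤ) : Matrix (Fin (n+2)) (Fin (n+2)) ℤ) *
      Matrix.single 0 1 1 = 0 :=
    Matrix.single_mul_single_of_ne (h := show (1:Fin (n+2)) ≠ 0 by simp) ..
  simp only [gmatZ, add_mul, mul_add, Matrix.smul_mul, Matrix.mul_smul, one_mul, mul_one, h,
    smul_zero, smul_smul]
  module

lemma gmuls_apply (n : ℕ) (x : ℤ) (s : Matrix (Fin (n+2)) (Fin (n+2)) ℤ) (i j : Fin (n+2)) :
    (gmatZ n x * s) i j = s i j + (if i = 0 then x * s 1 j else 0) := by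
  rw [gmatZ, add_mul, Matrix.smul_mul, one_mul, Matrix.add_apply, Matrix.smul_apply]
  by_cases h : i = 0
  · subst h; simp
  · simp [h]

lemma smulg_apply (n : ℕ) (x : ℤ) (M : Matrix (Fin (n+2)) (Fin (n+2)) ℤ) (i j : Fin (n+2)) :
    (M * gmatZ n x) i j = M i j + (if j = 1 then x * M i 0 else 0) := by
  rw [gmatZ, mul_add, Matrix.mul_smul, mul_one, Matrix.add_apply, Matrix.smul_apply]
  by_cases h : j = 1
  · subst h; simp [mul_comm]
  · simp [h]

lemma conjd_apply_ne_one (n : ℕ) (x : ℤ) (s : Matrix (Fin (n+2)) (Fin (n+2)) ℤ)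
    (i j : Fin (n+2)) (hj : j ≠ 1) :
    conjd n x s i j = s i j + (if i = 0 then x * s 1 j else 0) := by
  rw [conjd, smulg_apply, if_neg hj, add_zero, gmuls_apply]

lemma det_conjd (n : ℕ) (x : ℤ) (s : Matrix (Fin (n+2)) (Fin (n+2)) ℤ) :
    (conjd n x s).det = s.det := by
  have h1 : (gmatZ n x).det * (gmatZ n (-x)).det = 1 := by
    rw [← Matrix.det_mul, gmat_mul_neg, Matrix.det_one]
  calc (conjd n x s).det = (gmatZ n x).det * (gmatZ n (-x)).det * s.det := by
        rw [conjd, Matrix.det_mul, Matrix.det_mul]; ring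
    _ = s.det := by rw [h1, one_mul]

/-- `ψ_d²` maps `P_d ∩ S₀(n,N)^±` into `S₀(n-1, N/d)^±`. -/
theorem stmt2 (p : ℕ) (hp : p.Prime) (n N d : ℕ) (hN : 0 < N) (hd : 0 < d) (hdvd : d ∣ N)
    (hgcd : Nat.gcd d (N / d) = 1) (s : Matrix (Fin (n + 2)) (Fin (n + 2)) ℤ)
    (hs : s ∈ S0pm p N)
    (hsPd : ∀ j : Fin (n + 2), j ≠ 0 → conjd n (d : ℤ) s 0 j = 0) :
    psi2 n (d : ℤ) s ∈ S0pm p (N / d) := by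
  obtain ⟨hdet0, hgcd0, hrow⟩ := hs
  -- determinant factorization
  have hdetc : (conjd n (d : ℤ) s).det
      = psi1 n (d : ℤ) s * (psi2 n (d : ℤ) s).det := by
    rw [Matrix.det_succ_row_zero]
    rw [Finset.sum_eq_single 0]
    · simp only [Fin.val_zero, pow_zero, one_mul, Fin.succAbove_zero]
      rfl
    · intro j _ hj
      rw [hsPd j hj, mul_zero, zero_mul]
    · intro h; exact absurd (Finset.mem_univ 0) h
  have hdets : s.det = psi1 n (d : ℤ) s * (psi2 n (d : ℤ) s).det := by
    rw [← hdetc, det_conjd]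
  have hdvd2 : (psi2 n (d : ℤ) s).det ∣ s.det := ⟨psi1 n (d : ℤ) s, by rw [hdets]; ring⟩
  refine ⟨?_, ?_, ?_⟩
  · intro h
    exact hdet0 (by rw [hdets, h, mul_zero])
  · -- coprimality
    have h1 : Nat.Coprime s.det.natAbs (p * N) := by
      have := hgcd0
      rwa [Int.gcd, Int.natAbs_mul, Int.natAbs_natCast, Int.natAbs_natCast] at this
    have h2 : Nat.Coprime (psi2 n (d : ℤ) s).det.natAbs (p * N) :=
      Nat.Coprime.coprime_dvd_left (Int.natAbs_dvd_natAbs.mpr hdvd2) h1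
    have h3 : Nat.Coprime (psi2 n (d : ℤ) s).det.natAbs (p * (N / d)) :=
      Nat.Coprime.coprime_dvd_right (mul_dvd_mul_left p (Nat.div_dvd_of_dvd hdvd)) h2
    rw [Int.gcd, Int.natAbs_mul, Int.natAbs_natCast, Int.natAbs_natCast]
    exact h3
  · -- first row condition
    intro j hj
    have hsj : j.succ ≠ (1 : Fin (n + 2)) := by
      intro h
      apply hj
      have : (1 : Fin (n + 2)) = (0 : Fin (n + 1)).succ := rfl
      rw [this] at h
      exact Fin.succ_injective _ h
    have hs0 : j.succ ≠ (0 : Fin (n + 2)) := Fin.succ_ne_zero j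
    have hzero := hsPd j.succ hs0
    rw [conjd_apply_ne_one n (d : ℤ) s 0 j.succ hsj, if_pos rfl] at hzero
    -- hzero : s 0 j.succ + d * s 1 j.succ = 0
    obtain ⟨m, hm⟩ := hrow j.succ hs0
    have hNd : (N : ℤ) = (d : ℤ) * ((N / d : ℕ) : ℤ) := by
      rw [← Nat.cast_mul, Nat.mul_div_cancel' hdvd]
    have hkey : (d : ℤ) * s 1 j.succ = (d : ℤ) * (-(((N / d : ℕ) : ℤ) * m)) := by
      have : (d : ℤ) * s 1 j.succ = -s 0 j.succ := by linarith
      rw [this, hm, hNd]; ring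
    have hds : s 1 j.succ = -(((N / d : ℕ) : ℤ) * m) :=
      mul_left_cancel₀ (by exact_mod_cast hd.ne') hkey
    have hval : psi2 n (d : ℤ) s 0 j = s 1 j.succ := by
      show conjd n (d : ℤ) s (0 : Fin (n+1)).succ j.succ = s 1 j.succ
      rw [conjd_apply_ne_one n (d : ℤ) s _ j.succ hsj]
      have h0 : (0 : Fin (n + 1)).succ ≠ (0 : Fin (n + 2)) := Fin.succ_ne_zero 0
      rw [if_neg h0, add_zero]
      rfl
    rw [hval, hds]
    exact ⟨-m, by ring⟩
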